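/- Let n ≥ 1 and let C be a real n × n matrix. For ε > 0 let P⁰(ε) denote the unique minimizer over the transport polytope Π_n of ∑_{i,j} C_{ij} P_{ij} − ε H(P), where H(P) = −∑_{i,j} P_{ij} log P_{ij}. Then as ε → ∞, P⁰(ε) converges to the matrix P̄ with all entries equal to 1/n², i.e., P⁰(ε)_{ij} → 1/n² for all i, j. -/

import Mathlib

open scoped BigOperators
open Filter

/-- The transport polytope: `n × n` matrices with nonnegative entries whose
every row sum and every column sum equals `1/n`. -/
def transportPolytope (n : ℕ) : Set (Matrix (Fin n) (Fin n) ℝ) :=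
  {P | (∀ i j, 0 ≤ P i j) ∧ (∀ i, ∑ j, P i j = 1 / n) ∧ (∀ j, ∑ i, P i j = 1 / n)}

/-- The entropy of a matrix, `H(P) = -∑ P_{ij} log P_{ij}` (with `0 log 0 = 0`,
as `Real.log 0 = 0`). -/
noncomputable def matrixEntropy {n : ℕ} (P : Matrix (Fin n) (Fin n) ℝ) : ℝ :=
  -∑ i, ∑ j, P i j * Real.log (P i j)

noncomputable def gfun (u x : ℝ) : ℝ := x * Real.log x - x * Real.log u - x + u

lemma gfun_pos {u x : ℝ} (hu : 0 < u) (hx : 0 ≤ x) (hne : x ≠ u) :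
    0 < gfun u x := by
  rcases eq_or_lt_of_le hx with h | h
  · simp [gfun, ← h, hu]
  · have hux : 0 < u / x := div_pos hu h
    have hne1 : u / x ≠ 1 := by
      intro habs
      exact hne ((div_eq_one_iff_eq h.ne').mp habs).symm
    have := Real.log_lt_sub_one_of_pos hux hne1
    rw [Real.log_div hu.ne' h.ne'] at this
    have h2 : x * (Real.log u - Real.log x) < x * (u / x - 1) :=
      (mul_lt_mul_iff_right₀ h).mpr this
    have h3 : x * (u / x - 1) = u - x := by field_simp
    rw [h3] at h2
    unfold gfun
    nlinarith

lemma gfun_nonneg {u x : ℝ} (hu : 0 < u) (hx : 0 ≤ x) : 0 ≤ gfun u x := by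
  rcases eq_or_ne x u with rfl | hne
  · simp [gfun]
  · exact (gfun_pos hu hx hne).le

lemma gfun_continuous (u : ℝ) : Continuous (gfun u) := by
  unfold gfun
  exact ((Real.continuous_mul_log.sub (continuous_id.mul continuous_const)).sub
    continuous_id).add continuous_const

lemma gfun_small_imp_close {u b : ℝ} (hu : 0 < u) {δ : ℝ} (hδ : 0 < δ) :
    ∃ m > 0, ∀ x ∈ Set.Icc (0:ℝ) b, gfun u x < m → |x - u| < δ := by
  set S : Set ℝ := Set.Icc (0:ℝ) b \ Metric.ball u δ with hS
  have hScomp : IsCompact S := isCompact_Icc.diff Metric.isOpen_ball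
  rcases S.eq_empty_or_nonempty with hSe | hSne
  · refine ⟨1, one_pos, fun x hx _ => ?_⟩
    have : x ∈ Metric.ball u δ := by
      by_contra hxb
      have : x ∈ S := ⟨hx, hxb⟩
      simp [hSe] at this
    simpa [Real.dist_eq] using this
  · obtain ⟨x₀, hx₀S, hx₀min⟩ :=
      hScomp.exists_isMinOn hSne (gfun_continuous u).continuousOn
    refine ⟨gfun u x₀, ?_, fun x hx hgx => ?_⟩
    · apply gfun_pos hu hx₀S.1.1
      intro habs
      have : x₀ ∈ Metric.ball u δ := by simp [Metric.mem_ball, habs, Real.dist_eq, hδ]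
      exact hx₀S.2 this
    · by_contra hfar
      have hxS : x ∈ S := ⟨hx, by simpa [Metric.mem_ball, Real.dist_eq] using hfar⟩
      exact absurd (hx₀min hxS) (not_le.mpr hgx)

/-- As `ε → ∞`, the entropic optimal transport plan `P⁰(ε)` converges to the
maximally diffuse plan with all entries equal to `1/n²`. -/
theorem entropic_ot_plan_diffuse_limit (n : ℕ) (hn : 1 ≤ n)
    (C : Matrix (Fin n) (Fin n) ℝ)
    (P0 : ℝ → Matrix (Fin n) (Fin n) ℝ)
    (hP0 : ∀ ε : ℝ, 0 < ε → P0 ε ∈ transportPolytope n ∧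
      ∀ P ∈ transportPolytope n,
        (∑ i, ∑ j, C i j * P0 ε i j) - ε * matrixEntropy (P0 ε) ≤
          (∑ i, ∑ j, C i j * P i j) - ε * matrixEntropy P) :
    Tendsto P0 atTop
      (nhds (Matrix.of fun _ _ => (1 : ℝ) / (n ^ 2 : ℕ))) := by
  have hn0 : (0:ℝ) < n := by exact_mod_cast Nat.lt_of_lt_of_le Nat.zero_lt_one hn
  set u : ℝ := 1 / (n:ℝ)^2 with hu_def
  have hupos : 0 < u := by positivity
  have hn1 : (1:ℝ) ≤ n := by exact_mod_cast hn
  have hu1 : u ≤ 1 := by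
    rw [hu_def]
    rw [div_le_one (by positivity)]
    nlinarith
  set Pbar : Matrix (Fin n) (Fin n) ℝ := Matrix.of fun _ _ => (1 : ℝ) / (n ^ 2 : ℕ) with hPbar_def
  have hPbar_entry : ∀ i j, Pbar i j = u := by
    intro i j
    simp only [hPbar_def, Matrix.of_apply, hu_def]
    push_cast
    ring
  have hnu : (n:ℝ) * u = 1 / n := by
    rw [hu_def]; field_simp
  have hPbar_mem : Pbar ∈ transportPolytope n := by
    refine ⟨fun i j => by rw [hPbar_entry]; exact hupos.le, fun i => ?_, fun j => ?_⟩
    · simp [hPbar_entry, Finset.sum_const, Finset.card_univ, hnu]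
    · simp [hPbar_entry, Finset.sum_const, Finset.card_univ, hnu]
  have hHbar : matrixEntropy Pbar = - Real.log u := by
    have h1 : (n:ℝ) * ((n:ℝ) * (u * Real.log u)) = Real.log u := by
      rw [hu_def]; field_simp
    simp only [matrixEntropy, hPbar_entry, Finset.sum_const, Finset.card_univ,
      Fintype.card_fin, nsmul_eq_mul]
    rw [h1]
  have hsum1 : ∀ P ∈ transportPolytope n, ∑ i, ∑ j, P i j = 1 := by
    intro P hP
    rw [Finset.sum_congr rfl (fun i _ => hP.2.1 i)]
    simp [Finset.sum_const, Finset.card_univ]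
    field_simp
  have hentry_le : ∀ P ∈ transportPolytope n, ∀ i j, P i j ≤ 1 / (n:ℝ) := by
    intro P hP i j
    have := Finset.single_le_sum (f := fun j' => P i j') (fun j' _ => hP.1 i j')
      (Finset.mem_univ j)
    rw [hP.2.1 i] at this
    exact this
  have hidentity : ∀ P ∈ transportPolytope n,
      ∑ i, ∑ j, gfun u (P i j) = matrixEntropy Pbar - matrixEntropy P := by
    intro P hP
    have expand : ∑ i, ∑ j, gfun u (P i j)
        = (∑ i, ∑ j, P i j * Real.log (P i j))
          - (∑ i, ∑ j, P i j) * Real.log u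
          - (∑ i, ∑ j, P i j) + (n:ℝ) * ((n:ℝ) * u) := by
      simp only [gfun, Finset.sum_sub_distrib, Finset.sum_add_distrib,
        Finset.sum_const, Finset.card_univ, Fintype.card_fin, nsmul_eq_mul,
        ← Finset.sum_mul]
    rw [expand, hsum1 P hP, hHbar, matrixEntropy]
    have : (n:ℝ) * ((n:ℝ) * u) = 1 := by rw [hu_def]; field_simp
    rw [this]
    ring
  set B : ℝ := (∑ i, ∑ j, |C i j|) * 2 with hB_def
  have hB0 : 0 ≤ B := by positivity
  have hcostbound : ∀ P ∈ transportPolytope n,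
      (∑ i, ∑ j, C i j * Pbar i j) - (∑ i, ∑ j, C i j * P i j) ≤ B := by
    intro P hP
    have heq : (∑ i, ∑ j, C i j * Pbar i j) - (∑ i, ∑ j, C i j * P i j)
        = ∑ i, ∑ j, C i j * (Pbar i j - P i j) := by
      simp [mul_sub, Finset.sum_sub_distrib]
    rw [heq, hB_def, Finset.sum_mul]
    refine Finset.sum_le_sum fun i _ => ?_
    rw [Finset.sum_mul]
    refine Finset.sum_le_sum fun j _ => ?_
    have h1 : C i j * (Pbar i j - P i j) ≤ |C i j| * |Pbar i j - P i j| := by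
      calc C i j * (Pbar i j - P i j) ≤ |C i j * (Pbar i j - P i j)| := le_abs_self _
        _ = |C i j| * |Pbar i j - P i j| := abs_mul _ _
    have hx0 := hP.1 i j
    have hx1 : P i j ≤ 1 := le_trans (hentry_le P hP i j) (by
      rw [div_le_one hn0]; exact hn1)
    have h2 : |Pbar i j - P i j| ≤ 2 := by
      rw [hPbar_entry]
      rw [abs_le]
      constructor <;> nlinarith
    nlinarith [abs_nonneg (C i j)]
  refine tendsto_pi_nhds.mpr ?_
  intro i
  rw [tendsto_pi_nhds]
  intro j
  rw [Metric.tendsto_atTop]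
  intro δ hδ
  obtain ⟨m, hm, hmkey⟩ := gfun_small_imp_close (b := 1 / (n:ℝ)) hupos hδ
  refine ⟨B / m + 1, fun ε hε => ?_⟩
  have hBm : 0 ≤ B / m := by positivity
  have hεpos : 0 < ε := by linarith
  obtain ⟨hmem, hopt⟩ := hP0 ε hεpos
  have hopt' := hopt Pbar hPbar_mem
  have hcb := hcostbound (P0 ε) hmem
  have h1 : ε * (matrixEntropy Pbar - matrixEntropy (P0 ε)) ≤ B := by
    rw [mul_sub]
    linarith
  have hεm : B < ε * m := by
    have h2 : B / m < ε := by linarith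
    calc B = (B / m) * m := by field_simp
      _ < ε * m := (mul_lt_mul_iff_left₀ hm).mpr h2
  have h3 : matrixEntropy Pbar - matrixEntropy (P0 ε) < m := by
    nlinarith
  have hgle : gfun u (P0 ε i j) ≤ matrixEntropy Pbar - matrixEntropy (P0 ε) := by
    rw [← hidentity (P0 ε) hmem]
    calc gfun u (P0 ε i j) ≤ ∑ j', gfun u (P0 ε i j') :=
          Finset.single_le_sum (f := fun j' => gfun u (P0 ε i j'))
            (fun j' _ => gfun_nonneg hupos (hmem.1 i j')) (Finset.mem_univ j)
      _ ≤ ∑ i', ∑ j', gfun u (P0 ε i' j') :=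
          Finset.single_le_sum (f := fun i' => ∑ j', gfun u (P0 ε i' j'))
            (fun i' _ => Finset.sum_nonneg fun j' _ => gfun_nonneg hupos (hmem.1 i' j'))
            (Finset.mem_univ i)
  have hclose := hmkey (P0 ε i j) ⟨hmem.1 i j, hentry_le (P0 ε) hmem i j⟩
    (lt_of_le_of_lt hgle h3)
  rw [Real.dist_eq, hPbar_entry]
  exact hclose
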